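/- Let (R,G) be a left e-faithful graded ring. Then the intersection graph G(R_e) of left ideals of R_e is connected if and only if the intersection graph Gr_G(R) of graded left ideals of R is connected. -/

import Mathlib

variable {G R : Type*} [AddGroup G] [DecidableEq G] [Ring R]

/-- The set of proper nontrivial `G`-graded left ideals of `R`. -/
def hV (𝒜 : G → AddSubgroup R) [GradedRing 𝒜] : Set (Ideal R) :=
  {I | I ≠ ⊥ ∧ I ≠ ⊤ ∧ Ideal.IsHomogeneous 𝒜 I}

/-- The intersection graph on a set of (left) ideals: two distinct ideals are
adjacent iff their intersection is nonzero. -/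
def interGraph (V : Set (Ideal R)) : SimpleGraph V where
  Adj I J := I ≠ J ∧ (I : Ideal R) ⊓ (J : Ideal R) ≠ ⊥
  symm := ⟨fun I J ⟨h1, h2⟩ => ⟨h1.symm, by rwa [inf_comm] at h2⟩⟩
  loopless := ⟨fun I ⟨h1, _⟩ => h1 rfl⟩
/-- The set of proper nontrivial left ideals of the identity component `R_e = 𝒜 0`. -/
def V0 (𝒜 : G → AddSubgroup R) [GradedRing 𝒜] : Set (Ideal ↥(𝒜 0)) :=
  {I | I ≠ ⊥ ∧ I ≠ ⊤}

section aux

variable (𝒜 : G → AddSubgroup R) [GradedRing 𝒜]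

/-- The inclusion of the identity component as a ring hom. -/
def incl : ↥(𝒜 0) →+* R where
  toFun := Subtype.val
  map_one' := rfl
  map_mul' _ _ := rfl
  map_zero' := rfl
  map_add' _ _ := rfl

/-- Contraction of an ideal of `R` to an ideal of `R_e`. -/
def psi0 (I : Ideal R) : Ideal ↥(𝒜 0) := I.comap (incl 𝒜)

/-- Extension of an ideal of `R_e` to a (left) ideal of `R`. -/
def phi0 (I : Ideal ↥(𝒜 0)) : Ideal R := Ideal.span (Subtype.val '' (I : Set ↥(𝒜 0)))

variable {𝒜}

lemma mem_psi0 {I : Ideal R} {x : ↥(𝒜 0)} : x ∈ psi0 𝒜 I ↔ (x : R) ∈ I := Iff.rfl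

lemma mem_phi0 {I : Ideal ↥(𝒜 0)} {x : ↥(𝒜 0)} (hx : x ∈ I) : (x : R) ∈ phi0 𝒜 I :=
  Ideal.subset_span ⟨x, hx, rfl⟩

lemma key_phi0 {I : Ideal ↥(𝒜 0)} {x : R} (hx : x ∈ phi0 𝒜 I) :
    ∀ r : R, DirectSum.decompose 𝒜 (r * x) 0 ∈ I := by
  induction hx using Submodule.span_induction with
  | mem y hy =>
    obtain ⟨z, hz, rfl⟩ := hy
    intro r
    have h1 : (DirectSum.decompose 𝒜 (r * (z : R)) (0 + 0) : R) =
        (DirectSum.decompose 𝒜 r 0 : R) * (z : R) :=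
      DirectSum.coe_decompose_mul_add_of_right_mem 𝒜 z.2
    rw [zero_add] at h1
    have h2 : DirectSum.decompose 𝒜 (r * (z : R)) 0 = DirectSum.decompose 𝒜 r 0 * z :=
      Subtype.ext h1
    rw [h2]
    exact I.mul_mem_left _ hz
  | zero => intro r; simp
  | add a b _ _ ha hb =>
    intro r
    rw [mul_add, DirectSum.decompose_add, DirectSum.add_apply]
    exact add_mem (ha r) (hb r)
  | smul s a _ ha =>
    intro r
    rw [smul_eq_mul, ← mul_assoc]
    exact ha (r * s)

lemma psi0_phi0 (I : Ideal ↥(𝒜 0)) : psi0 𝒜 (phi0 𝒜 I) = I := by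
  ext x
  rw [mem_psi0]
  constructor
  · intro hx
    have h := key_phi0 hx 1
    rw [one_mul] at h
    have hd : DirectSum.decompose 𝒜 (x : R) 0 = x :=
      Subtype.ext (DirectSum.decompose_of_mem_same 𝒜 x.2)
    rwa [hd] at h
  · exact mem_phi0

lemma psi0_ne_bot (hfaith : ∀ (τ : G), ∀ x ∈ 𝒜 τ, x ≠ 0 → ∃ r ∈ 𝒜 (-τ), r * x ≠ 0)
    {I : Ideal R} (hhom : I.IsHomogeneous 𝒜) (hI : I ≠ ⊥) : psi0 𝒜 I ≠ ⊥ := by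
  classical
  rw [Submodule.ne_bot_iff] at hI ⊢
  obtain ⟨x, hxI, hx0⟩ := hI
  have hex : ∃ τ, (DirectSum.decompose 𝒜 x τ : R) ≠ 0 := by
    by_contra h
    push_neg at h
    apply hx0
    rw [← DirectSum.sum_support_decompose 𝒜 x]
    exact Finset.sum_eq_zero fun i _ => h i
  obtain ⟨τ, hτ⟩ := hex
  obtain ⟨r, hr, hrx⟩ := hfaith τ _ (SetLike.coe_mem _) hτ
  have hmem0 : r * (DirectSum.decompose 𝒜 x τ : R) ∈ 𝒜 0 := by
    have := SetLike.mul_mem_graded hr (SetLike.coe_mem (DirectSum.decompose 𝒜 x τ))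
    rwa [neg_add_cancel] at this
  refine ⟨⟨_, hmem0⟩, ?_, ?_⟩
  · rw [mem_psi0]
    exact I.mul_mem_left r (hhom τ hxI)
  · exact fun h => hrx (congrArg Subtype.val h)

lemma psi0_ne_top {I : Ideal R} (hI : I ≠ ⊤) : psi0 𝒜 I ≠ ⊤ := by
  intro h
  apply hI
  rw [Ideal.eq_top_iff_one] at h ⊢
  exact mem_psi0.mp h

lemma phi0_ne_bot {I : Ideal ↥(𝒜 0)} (hI : I ≠ ⊥) : phi0 𝒜 I ≠ ⊥ := by
  rw [Submodule.ne_bot_iff] at hI ⊢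
  obtain ⟨x, hx, hx0⟩ := hI
  exact ⟨x, mem_phi0 hx, fun h => hx0 (Subtype.ext h)⟩

lemma phi0_ne_top {I : Ideal ↥(𝒜 0)} (hI : I ≠ ⊤) : phi0 𝒜 I ≠ ⊤ := by
  intro h
  apply hI
  rw [← psi0_phi0 (𝒜 := 𝒜) I, h]
  simp [psi0]

lemma phi0_hom (I : Ideal ↥(𝒜 0)) : (phi0 𝒜 I).IsHomogeneous 𝒜 :=
  Ideal.homogeneous_span 𝒜 _ (by rintro x ⟨z, _, rfl⟩; exact ⟨0, z.2⟩)

lemma phi0_psi0_le (I : Ideal R) : phi0 𝒜 (psi0 𝒜 I) ≤ I :=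
  Ideal.span_le.mpr (by rintro x ⟨z, hz, rfl⟩; exact hz)

end aux

lemma reach_map {V W : Type*} {G1 : SimpleGraph V} {G2 : SimpleGraph W} (f : V → W)
    (h : ∀ u v, G1.Adj u v → f u = f v ∨ G2.Adj (f u) (f v)) {u v : V}
    (huv : G1.Reachable u v) : G2.Reachable (f u) (f v) := by
  obtain ⟨w⟩ := huv
  induction w with
  | nil => exact SimpleGraph.Reachable.refl _
  | cons ha _ ih =>
    rcases h _ _ ha with he | hadj
    · rw [he]; exact ih
    · exact hadj.reachable.trans ih

set_option maxHeartbeats 2000000 in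
/-- For a left `e`-faithful grading, the intersection graph of left
ideals of `R_e` is connected iff the intersection graph of graded left ideals of
`R` is connected. -/
theorem stmt13 (𝒜 : G → AddSubgroup R) [GradedRing 𝒜]
    (hfaith : ∀ (τ : G), ∀ x ∈ 𝒜 τ, x ≠ 0 → ∃ r ∈ 𝒜 (-τ), r * x ≠ 0) :
    (interGraph (V0 𝒜)).Connected ↔ (interGraph (hV 𝒜)).Connected := by
  -- the two vertex maps
  let F : ↥(V0 𝒜) → ↥(hV 𝒜) := fun I =>
    ⟨phi0 𝒜 I.1, phi0_ne_bot I.2.1, phi0_ne_top I.2.2, phi0_hom I.1⟩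
  let Gm : ↥(hV 𝒜) → ↥(V0 𝒜) := fun I =>
    ⟨psi0 𝒜 I.1, psi0_ne_bot hfaith I.2.2.2 I.2.1, psi0_ne_top I.2.2.1⟩
  have hF : ∀ u v, (interGraph (V0 𝒜)).Adj u v →
      F u = F v ∨ (interGraph (hV 𝒜)).Adj (F u) (F v) := by
    rintro u v ⟨_, hinf⟩
    by_cases he : F u = F v
    · exact Or.inl he
    · refine Or.inr ⟨he, ?_⟩
      rw [Submodule.ne_bot_iff] at hinf ⊢
      obtain ⟨x, hx, hx0⟩ := hinf
      rw [Submodule.mem_inf] at hx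
      exact ⟨(x : R), Submodule.mem_inf.mpr ⟨mem_phi0 hx.1, mem_phi0 hx.2⟩,
        fun h => hx0 (Subtype.ext h)⟩
  have hG : ∀ u v, (interGraph (hV 𝒜)).Adj u v →
      Gm u = Gm v ∨ (interGraph (V0 𝒜)).Adj (Gm u) (Gm v) := by
    rintro u v ⟨_, hinf⟩
    by_cases he : Gm u = Gm v
    · exact Or.inl he
    · refine Or.inr ⟨he, ?_⟩
      have hhom : (u.1 ⊓ v.1).IsHomogeneous 𝒜 := u.2.2.2.inf v.2.2.2
      have := psi0_ne_bot hfaith hhom hinf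
      rwa [psi0, Ideal.comap_inf] at this
  constructor
  · intro h
    haveI : Nonempty ↥(hV 𝒜) := h.nonempty.map F
    refine SimpleGraph.Connected.mk ?_
    rintro I J
    -- step from a graded ideal to the extension of its contraction
    have step : ∀ I : ↥(hV 𝒜), (interGraph (hV 𝒜)).Reachable I (F (Gm I)) := by
      intro I
      by_cases he : I = F (Gm I)
      · rw [← he]
      · refine SimpleGraph.Adj.reachable ⟨he, ?_⟩
        have hle : phi0 𝒜 (psi0 𝒜 I.1) ≤ I.1 := phi0_psi0_le I.1
        have : (I.1 : Ideal R) ⊓ phi0 𝒜 (psi0 𝒜 I.1) = phi0 𝒜 (psi0 𝒜 I.1) :=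
          inf_eq_right.mpr hle
        rw [show ((F (Gm I) : Ideal R)) = phi0 𝒜 (psi0 𝒜 I.1) from rfl, this]
        exact phi0_ne_bot (psi0_ne_bot hfaith I.2.2.2 I.2.1)
    exact ((step I).trans (reach_map F hF (h.preconnected (Gm I) (Gm J)))).trans (step J).symm
  · intro h
    haveI : Nonempty ↥(V0 𝒜) := h.nonempty.map Gm
    refine SimpleGraph.Connected.mk ?_
    rintro I J
    have hr := reach_map Gm hG (h.preconnected (F I) (F J))
    have e1 : Gm (F I) = I := Subtype.ext (psi0_phi0 I.1)
    have e2 : Gm (F J) = J := Subtype.ext (psi0_phi0 J.1)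
    rwa [e1, e2] at hr
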